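/- arXiv:2311.13958 — 3 statements merged into one kernel-verified Lean document; each statement's English description precedes it below -/
import Mathlib

section
/- The tensor U₁ norm is the tightest convex minorant of the tensor U₀ norm on the unit ball of the tensor U_∞ norm: let S = {A ∈ E : ‖A‖_{U,∞} ≤ 1}. If g : E → ℝ is convex on S (in the sense ConvexOn ℝ S g) and satisfies g(B) ≤ ‖B‖_{U,0} for all B ∈ S, then g(A) ≤ ‖A‖_{U,1} for all A ∈ S. -/
open scoped RealInnerProductSpace

/-- The tensor `U₁` norm: `‖A‖_{U,1} = ∑ i, |(U A) i|`. -/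
noncomputable def tensorU1 {ι : Type*} [Fintype ι]
    (U : EuclideanSpace ℝ ι ≃ₗᵢ[ℝ] EuclideanSpace ℝ ι) (A : EuclideanSpace ℝ ι) : ℝ :=
  ∑ i, |U A i|

/-- The tensor `U_∞` norm: `‖A‖_{U,∞} = max_i |(U A) i|`. -/
noncomputable def tensorUinf {ι : Type*} [Fintype ι] [Nonempty ι]
    (U : EuclideanSpace ℝ ι ≃ₗᵢ[ℝ] EuclideanSpace ℝ ι) (A : EuclideanSpace ℝ ι) : ℝ :=
  Finset.univ.sup' Finset.univ_nonempty fun i => |U A i|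

/-- The tensor `U₀` norm: the number of nonzero entries of `U A`, as a real number. -/
noncomputable def tensorU0 {ι : Type*} [Fintype ι]
    (U : EuclideanSpace ℝ ι ≃ₗᵢ[ℝ] EuclideanSpace ℝ ι) (A : EuclideanSpace ℝ ι) : ℝ :=
  (Finset.univ.filter fun i => U A i ≠ 0).card

/-- Maximality half of Property 2(iii): the tensor `U₁` norm is the tightest convex
minorant of the tensor `U₀` norm on the unit ball `S` of the tensor `U_∞` norm. -/
theorem tensorU1_tightest_convex_minorant {ι : Type*} [Fintype ι] [Nonempty ι]
    (U : EuclideanSpace ℝ ι ≃ₗᵢ[ℝ] EuclideanSpace ℝ ι)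
    (S : Set (EuclideanSpace ℝ ι)) (hS : S = {A | tensorUinf U A ≤ 1})
    (g : EuclideanSpace ℝ ι → ℝ) (hg : ConvexOn ℝ S g)
    (hle : ∀ B ∈ S, g B ≤ tensorU0 U B) :
    ∀ A ∈ S, g A ≤ tensorU1 U A := by
  classical
  subst hS
  have hmemS : ∀ x : EuclideanSpace ℝ ι, (∀ i, |x i| ≤ 1) →
      U.symm x ∈ {A : EuclideanSpace ℝ ι | tensorUinf U A ≤ 1} := by
    intro x hx
    simp only [Set.mem_setOf_eq, tensorUinf]
    apply Finset.sup'_le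
    intro i _
    simpa using hx i
  suffices h : ∀ n (x : EuclideanSpace ℝ ι),
      (Finset.univ.filter fun i => x i ≠ 0 ∧ |x i| ≠ 1).card = n →
      (∀ i, |x i| ≤ 1) → g (U.symm x) ≤ ∑ i, |x i| by
    intro A hA
    have hA' : ∀ i, |U A i| ≤ 1 := fun i =>
      le_trans (Finset.le_sup' (fun i => |U A i|) (Finset.mem_univ i)) hA
    have := h _ (U A) rfl hA'
    simpa [tensorU1] using this
  intro n
  induction n using Nat.strong_induction_on with
  | _ n ih =>
    intro x hcard hx
    by_cases hbase : ∀ i, x i = 0 ∨ |x i| = 1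
    · have hmem := hmemS x hx
      refine (hle _ hmem).trans ?_
      have hU : tensorU0 U (U.symm x) = ((Finset.univ.filter fun i => x i ≠ 0).card : ℝ) := by
        simp [tensorU0]
      have hsum : (∑ i, |x i|) = ∑ i ∈ Finset.univ.filter (fun i => x i ≠ 0), (1:ℝ) := by
        rw [Finset.sum_filter]
        apply Finset.sum_congr rfl
        intro i _
        rcases hbase i with h0 | h1
        · simp [h0]
        · have hne : x i ≠ 0 := by intro h; rw [h] at h1; simp at h1
          simp [hne, h1]
      rw [hU, hsum, Finset.sum_const, nsmul_eq_mul, mul_one]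
    · push_neg at hbase
      obtain ⟨j, hj0, hj1⟩ := hbase
      have haj : |x j| < 1 := lt_of_le_of_ne (hx j) hj1
      have haj0 : 0 < |x j| := abs_pos.mpr hj0
      set a := |x j| with ha
      set x0 : EuclideanSpace ℝ ι := WithLp.toLp 2 (Function.update x j 0) with hx0
      set x1 : EuclideanSpace ℝ ι := WithLp.toLp 2 (Function.update x j (x j / a)) with hx1
      have hx1j : |x1 j| = 1 := by
        simp [hx1, Function.update_self, abs_div, ha, abs_abs, div_self (ne_of_gt haj0), hj0]
      have hx0le : ∀ i, |x0 i| ≤ 1 := by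
        intro i
        by_cases hij : i = j
        · subst hij; simp [hx0]
        · simpa [hx0, Function.update_of_ne hij] using hx i
      have hx1le : ∀ i, |x1 i| ≤ 1 := by
        intro i
        by_cases hij : i = j
        · subst hij; rw [hx1j]
        · simpa [hx1, Function.update_of_ne hij] using hx i
      -- filter sets
      have hfilt0 : (Finset.univ.filter fun i => x0 i ≠ 0 ∧ |x0 i| ≠ 1) =
          (Finset.univ.filter fun i => x i ≠ 0 ∧ |x i| ≠ 1).erase j := by
        ext i
        by_cases hij : i = j
        · subst hij
          simp [hx0, Function.update_self]
        · simp [hx0, Function.update_of_ne hij, hij]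
      have hfilt1 : (Finset.univ.filter fun i => x1 i ≠ 0 ∧ |x1 i| ≠ 1) =
          (Finset.univ.filter fun i => x i ≠ 0 ∧ |x i| ≠ 1).erase j := by
        ext i
        by_cases hij : i = j
        · subst hij
          simp [hx1j]
        · simp [hx1, Function.update_of_ne hij, hij]
      have hjmem : j ∈ Finset.univ.filter fun i => x i ≠ 0 ∧ |x i| ≠ 1 := by
        simp [hj0, hj1, ← ha]
      have hcard' : ((Finset.univ.filter fun i => x i ≠ 0 ∧ |x i| ≠ 1).erase j).card < n := by
        rw [← hcard]
        exact Finset.card_erase_lt_of_mem hjmem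
      have h0 := ih _ (hfilt0 ▸ hcard') x0 rfl hx0le
      have h1 := ih _ (hfilt1 ▸ hcard') x1 rfl hx1le
      -- convex combination
      have hxeq : x = (1 - a) • x0 + a • x1 := by
        ext i
        by_cases hij : i = j
        · subst hij
          simp only [PiLp.toLp_apply, PiLp.add_apply, PiLp.smul_apply, hx0, hx1, Function.update_self,
            smul_eq_mul]
          field_simp
          simp
        · simp [PiLp.add_apply, PiLp.smul_apply, hx0, hx1, Function.update_of_ne hij,
            smul_eq_mul]
          ring
      have hsymm : U.symm x = (1 - a) • U.symm x0 + a • U.symm x1 := by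
        rw [hxeq]; simp [map_add, map_smul]
      have hga : g (U.symm x) ≤ (1 - a) * g (U.symm x0) + a * g (U.symm x1) := by
        rw [hsymm]
        exact hg.2 (hmemS x0 hx0le) (hmemS x1 hx1le)
          (by linarith) (le_of_lt haj0) (by ring)
      -- sums
      have hs0 : ∑ i, |x0 i| = (∑ i, |x i|) - a := by
        have e1 : ∑ i, |x0 i| = |x0 j| + ∑ i ∈ Finset.univ.erase j, |x0 i| :=
          (Finset.add_sum_erase _ _ (Finset.mem_univ j)).symm
        have e2 : ∑ i, |x i| = |x j| + ∑ i ∈ Finset.univ.erase j, |x i| :=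
          (Finset.add_sum_erase _ _ (Finset.mem_univ j)).symm
        have e3 : ∑ i ∈ Finset.univ.erase j, |x0 i| = ∑ i ∈ Finset.univ.erase j, |x i| :=
          Finset.sum_congr rfl fun i hi => by
            rw [Finset.mem_erase] at hi
            rw [hx0, PiLp.toLp_apply, Function.update_of_ne hi.1]
        rw [e1, e3, e2, ← ha]
        simp [hx0]
      have hs1 : ∑ i, |x1 i| = (∑ i, |x i|) - a + 1 := by
        have : ∑ i, |x1 i| = (∑ i ∈ Finset.univ.erase j, |x i|) + 1 := by
          rw [show ∑ i, |x1 i| = |x1 j| + ∑ i ∈ Finset.univ.erase j, |x1 i| by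
            exact (Finset.add_sum_erase _ _ (Finset.mem_univ j)).symm]
          rw [hx1j]
          rw [Finset.sum_congr rfl (fun i hi => ?_)]
          · ring
          · rw [Finset.mem_erase] at hi
            rw [hx1, PiLp.toLp_apply, Function.update_of_ne hi.1]
        rw [this]
        have : ∑ i, |x i| = |x j| + ∑ i ∈ Finset.univ.erase j, |x i| :=
          (Finset.add_sum_erase _ _ (Finset.mem_univ j)).symm
        rw [this, ← ha]; ring
      calc g (U.symm x) ≤ (1 - a) * g (U.symm x0) + a * g (U.symm x1) := hga
        _ ≤ (1 - a) * ((∑ i, |x i|) - a) + a * ((∑ i, |x i|) - a + 1) := by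
            rw [← hs1, ← hs0]
            have h1a : (0:ℝ) ≤ 1 - a := by linarith
            exact add_le_add (mul_le_mul_of_nonneg_left h0 h1a)
              (mul_le_mul_of_nonneg_left h1 (le_of_lt haj0))
        _ = ∑ i, |x i| := by ring
end

section
/- The slice-wise sum of nuclear norms is the dual norm of the slice-wise maximum of spectral norms: for every family X : Fin K → Matrix (Fin m) (Fin n) ℝ, the set {∑_{k} ∑_{i,j} (X k) i j · (Y k) i j : Y : Fin K → Matrix (Fin m) (Fin n) ℝ with ‖Y k‖₂ ≤ 1 for every k} has greatest element ∑_{k} ‖X k‖_*. -/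
/-- The spectral norm (largest singular value) of a real matrix: the `L2` operator norm
of the associated Euclidean linear map. -/
noncomputable def matrixSpectralNorm {m n : ℕ} (A : Matrix (Fin m) (Fin n) ℝ) : ℝ :=
  ‖LinearMap.toContinuousLinearMap (Matrix.toEuclideanLin A)‖

/-- The positive semidefinite square root of a positive semidefinite matrix
(removed from Mathlib; restated with its old definition). -/
noncomputable def Matrix.PosSemidef.sqrt {n : Type*} [Fintype n] [DecidableEq n]
    {A : Matrix n n ℝ} (hA : A.PosSemidef) : Matrix n n ℝ :=
  hA.1.eigenvectorUnitary.1 * Matrix.diagonal ((↑) ∘ (√·) ∘ hA.1.eigenvalues) *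
  (star hA.1.eigenvectorUnitary : Matrix n n ℝ)

/-- The nuclear norm (sum of singular values) of a real matrix: the trace of the
positive-semidefinite square root of `Aᴴ * A` (over `ℝ`, `Aᴴ = Aᵀ`). -/
noncomputable def nuclearNorm {m n : ℕ} (A : Matrix (Fin m) (Fin n) ℝ) : ℝ :=
  (Matrix.posSemidef_conjTranspose_mul_self A).sqrt.trace

namespace SliceDual
open Matrix Finset

lemma norm_sq_eq_dot {p : ℕ} (x : Fin p → ℝ) :
    ‖(WithLp.equiv 2 (Fin p → ℝ)).symm x‖ ^ 2 = x ⬝ᵥ x := by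
  rw [EuclideanSpace.norm_eq, Real.sq_sqrt (by positivity)]
  simp [dotProduct, sq]

lemma norm_eq_sqrt_dot {p : ℕ} (x : Fin p → ℝ) :
    ‖(WithLp.equiv 2 (Fin p → ℝ)).symm x‖ = Real.sqrt (x ⬝ᵥ x) := by
  rw [← norm_sq_eq_dot, Real.sqrt_sq (norm_nonneg _)]

lemma dot_le {p : ℕ} (x y : Fin p → ℝ) :
    x ⬝ᵥ y ≤ Real.sqrt (x ⬝ᵥ x) * Real.sqrt (y ⬝ᵥ y) := by
  rw [← norm_eq_sqrt_dot, ← norm_eq_sqrt_dot]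
  have := real_inner_le_norm ((WithLp.equiv 2 (Fin p → ℝ)).symm x)
    ((WithLp.equiv 2 (Fin p → ℝ)).symm y)
  simpa [PiLp.inner_apply, RCLike.inner_apply, dotProduct, mul_comm] using this

lemma mulVec_dot_le {m n : ℕ} (Y : Matrix (Fin m) (Fin n) ℝ) (x : Fin n → ℝ) :
    Real.sqrt ((Y *ᵥ x) ⬝ᵥ (Y *ᵥ x)) ≤ matrixSpectralNorm Y * Real.sqrt (x ⬝ᵥ x) := by
  rw [← norm_eq_sqrt_dot, ← norm_eq_sqrt_dot]
  have h := (LinearMap.toContinuousLinearMap (Matrix.toEuclideanLin Y)).le_opNorm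
      ((WithLp.equiv 2 (Fin n → ℝ)).symm x)
  simpa [matrixSpectralNorm, Matrix.toEuclideanLin_apply] using h

lemma spectralNorm_le_one {m n : ℕ} (Y : Matrix (Fin m) (Fin n) ℝ)
    (h : ∀ x : Fin n → ℝ, (Y *ᵥ x) ⬝ᵥ (Y *ᵥ x) ≤ x ⬝ᵥ x) : matrixSpectralNorm Y ≤ 1 := by
  apply ContinuousLinearMap.opNorm_le_bound _ zero_le_one
  intro x
  rw [one_mul]
  have h2 := h ((WithLp.equiv 2 (Fin n → ℝ)) x)
  have e1 : ‖LinearMap.toContinuousLinearMap (Matrix.toEuclideanLin Y) x‖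
      = Real.sqrt ((Y *ᵥ (WithLp.equiv 2 (Fin n → ℝ)) x) ⬝ᵥ
        (Y *ᵥ (WithLp.equiv 2 (Fin n → ℝ)) x)) := by
    rw [← norm_eq_sqrt_dot]; rfl
  have e2 : ‖x‖ = Real.sqrt (((WithLp.equiv 2 (Fin n → ℝ)) x) ⬝ᵥ
      ((WithLp.equiv 2 (Fin n → ℝ)) x)) := by
    rw [← norm_eq_sqrt_dot]; rfl
  rw [e1, e2]
  exact Real.sqrt_le_sqrt h2

lemma sum_dot_expand {m n : ℕ} (A Y : Matrix (Fin m) (Fin n) ℝ)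
    (V : Matrix (Fin n) (Fin n) ℝ) (hV : V * Vᴴ = 1) :
    ∑ p, ((A *ᵥ fun j => V j p) ⬝ᵥ (Y *ᵥ fun j => V j p)) = ∑ i, ∑ j, A i j * Y i j := by
  have hV' : ∀ j l, ∑ p, V j p * V l p = if j = l then 1 else 0 := by
    intro j l
    have := congrFun (congrFun hV j) l
    simpa [Matrix.mul_apply, Matrix.one_apply, conjTranspose_apply] using this
  calc ∑ p, ((A *ᵥ fun j => V j p) ⬝ᵥ (Y *ᵥ fun j => V j p))
      = ∑ p, ∑ i, (∑ j, A i j * V j p) * (∑ l, Y i l * V l p) := by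
        simp [dotProduct, mulVec]
    _ = ∑ i, ∑ j, ∑ l, (A i j * Y i l) * ∑ p, V j p * V l p := by
        rw [Finset.sum_comm]
        refine Finset.sum_congr rfl fun i _ => ?_
        simp_rw [Finset.sum_mul_sum, Finset.mul_sum]
        rw [Finset.sum_comm]
        refine Finset.sum_congr rfl fun j _ => ?_
        rw [Finset.sum_comm]
        refine Finset.sum_congr rfl fun l _ => ?_
        refine Finset.sum_congr rfl fun p _ => ?_
        ring
    _ = ∑ i, ∑ j, A i j * Y i j := by
        refine Finset.sum_congr rfl fun i _ => Finset.sum_congr rfl fun j _ => ?_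
        simp_rw [hV', mul_ite, mul_one, mul_zero]
        simp

lemma nuclearNorm_eq_sum {m n : ℕ} (A : Matrix (Fin m) (Fin n) ℝ) :
    nuclearNorm A
      = ∑ p, Real.sqrt ((Matrix.posSemidef_conjTranspose_mul_self A).1.eigenvalues p) := by
  set hS := Matrix.posSemidef_conjTranspose_mul_self A
  have h1 : star (hS.1.eigenvectorUnitary : Matrix (Fin n) (Fin n) ℝ) *
      (hS.1.eigenvectorUnitary : Matrix (Fin n) (Fin n) ℝ) = 1 :=
    Unitary.coe_star_mul_self hS.1.eigenvectorUnitary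
  rw [nuclearNorm, Matrix.PosSemidef.sqrt, Matrix.trace_mul_cycle, h1, one_mul,
    Matrix.trace_diagonal]
  simp [RCLike.ofReal_real_eq_id]

lemma sum_mulVec {m n p : ℕ} (M : Fin p → Matrix (Fin m) (Fin n) ℝ) (x : Fin n → ℝ) :
    (∑ q, M q) *ᵥ x = ∑ q, M q *ᵥ x := by
  funext i
  simp only [Matrix.mulVec, dotProduct, Matrix.sum_apply, Finset.sum_apply,
    Finset.sum_mul]
  exact Finset.sum_comm

lemma sum_dot {m p : ℕ} (f : Fin p → Fin m → ℝ) (w : Fin m → ℝ) :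
    (∑ q, f q) ⬝ᵥ w = ∑ q, f q ⬝ᵥ w := by
  simp only [dotProduct, Finset.sum_apply, Finset.sum_mul]
  exact Finset.sum_comm

lemma dot_sum {m p : ℕ} (w : Fin m → ℝ) (f : Fin p → Fin m → ℝ) :
    w ⬝ᵥ (∑ q, f q) = ∑ q, w ⬝ᵥ f q := by
  simp only [dotProduct, Finset.sum_apply, Finset.mul_sum]
  exact Finset.sum_comm

lemma vecMulVec_mulVec {m n : ℕ} (u : Fin m → ℝ) (w x : Fin n → ℝ) :
    Matrix.vecMulVec u w *ᵥ x = (w ⬝ᵥ x) • u := by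
  funext i
  simp only [Matrix.mulVec, dotProduct, Matrix.vecMulVec_apply, Pi.smul_apply,
    smul_eq_mul, Finset.sum_mul]
  exact Finset.sum_congr rfl fun j _ => by ring

lemma matrix_dual {m n : ℕ} (A : Matrix (Fin m) (Fin n) ℝ) :
    (∀ Y : Matrix (Fin m) (Fin n) ℝ, matrixSpectralNorm Y ≤ 1 →
      ∑ i, ∑ j, A i j * Y i j ≤ nuclearNorm A) ∧
    (∃ Y : Matrix (Fin m) (Fin n) ℝ, matrixSpectralNorm Y ≤ 1 ∧
      ∑ i, ∑ j, A i j * Y i j = nuclearNorm A) := by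
  set hS := Matrix.posSemidef_conjTranspose_mul_self A with hSdef
  set hH := hS.1 with hHdef
  set μ := hH.eigenvalues with hμdef
  set v : Fin n → Fin n → ℝ := fun p => ⇑(hH.eigenvectorBasis p) with hvdef
  have hμ0 : ∀ p, 0 ≤ μ p := fun p => hS.eigenvalues_nonneg p
  have heig : ∀ p, (Aᴴ * A) *ᵥ v p = μ p • v p := fun p => hH.mulVec_eigenvectorBasis p
  have hortho : ∀ p q, v p ⬝ᵥ v q = if p = q then 1 else 0 := by
    intro p q
    have := (orthonormal_iff_ite (𝕜 := ℝ)).mp hH.eigenvectorBasis.orthonormal p q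
    simpa [PiLp.inner_apply, RCLike.inner_apply, dotProduct, hvdef, mul_comm] using this
  have hAv : ∀ p q, (A *ᵥ v p) ⬝ᵥ (A *ᵥ v q) = if p = q then μ p else 0 := by
    intro p q
    rw [dotProduct_comm, dotProduct_mulVec, ← Matrix.mulVec_transpose,
      ← Matrix.conjTranspose_eq_transpose_of_trivial, Matrix.mulVec_mulVec, heig,
      smul_dotProduct, hortho]
    rcases eq_or_ne p q with h | h
    · subst h; simp
    · simp [h, Ne.symm h]
  have hnuc : nuclearNorm A = ∑ p, Real.sqrt (μ p) := nuclearNorm_eq_sum A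
  -- the unitary V and its columns
  set V : Matrix (Fin n) (Fin n) ℝ := (hH.eigenvectorUnitary : Matrix (Fin n) (Fin n) ℝ)
    with hVdef
  have hVcol : ∀ p, (fun j => V j p) = v p := by
    intro p; funext j
    exact hH.eigenvectorUnitary_apply j p
  have hVV : V * Vᴴ = 1 := by
    rw [← Matrix.star_eq_conjTranspose]
    exact Unitary.coe_mul_star_self hH.eigenvectorUnitary
  have hexpand : ∀ Y : Matrix (Fin m) (Fin n) ℝ,
      ∑ i, ∑ j, A i j * Y i j = ∑ p, ((A *ᵥ v p) ⬝ᵥ (Y *ᵥ v p)) := by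
    intro Y
    rw [← sum_dot_expand A Y V hVV]
    refine (Finset.sum_congr rfl fun p _ => ?_).symm
    rw [hVcol]
  -- Parseval
  have hpars : ∀ x : Fin n → ℝ, ∑ p, (v p ⬝ᵥ x) ^ 2 = x ⬝ᵥ x := by
    intro x
    have := hH.eigenvectorBasis.sum_inner_mul_inner ((WithLp.equiv 2 (Fin n → ℝ)).symm x)
      ((WithLp.equiv 2 (Fin n → ℝ)).symm x)
    simp only [PiLp.inner_apply, RCLike.inner_apply, starRingEnd_apply, star_trivial,
      WithLp.equiv_symm_apply, PiLp.toLp_apply] at this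
    calc ∑ p, (v p ⬝ᵥ x) ^ 2
        = ∑ p, (∑ j, x j * v p j) * (∑ j, v p j * x j) := by
          refine Finset.sum_congr rfl fun p _ => ?_
          rw [sq, dotProduct]
          congr 1
          exact Finset.sum_congr rfl fun j _ => mul_comm _ _
      _ = ∑ j, x j * x j := by simpa [hvdef, mul_comm] using this
      _ = x ⬝ᵥ x := rfl
  constructor
  · intro Y hY
    rw [hexpand Y, hnuc]
    refine Finset.sum_le_sum fun p _ => ?_
    have h1 : (A *ᵥ v p) ⬝ᵥ (Y *ᵥ v p)
        ≤ Real.sqrt ((A *ᵥ v p) ⬝ᵥ (A *ᵥ v p)) * Real.sqrt ((Y *ᵥ v p) ⬝ᵥ (Y *ᵥ v p)) :=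
      dot_le _ _
    have h2 : Real.sqrt ((A *ᵥ v p) ⬝ᵥ (A *ᵥ v p)) = Real.sqrt (μ p) := by
      rw [hAv p p]; simp
    have h3 : Real.sqrt ((Y *ᵥ v p) ⬝ᵥ (Y *ᵥ v p)) ≤ 1 := by
      calc Real.sqrt ((Y *ᵥ v p) ⬝ᵥ (Y *ᵥ v p))
          ≤ matrixSpectralNorm Y * Real.sqrt (v p ⬝ᵥ v p) := mulVec_dot_le Y (v p)
        _ ≤ 1 * 1 := by
            apply mul_le_mul hY _ (Real.sqrt_nonneg _) zero_le_one
            rw [hortho p p]; simp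
        _ = 1 := one_mul 1
    calc (A *ᵥ v p) ⬝ᵥ (Y *ᵥ v p)
        ≤ Real.sqrt (μ p) * Real.sqrt ((Y *ᵥ v p) ⬝ᵥ (Y *ᵥ v p)) := by rw [← h2]; exact h1
      _ ≤ Real.sqrt (μ p) := mul_le_of_le_one_right (Real.sqrt_nonneg _) h3
  · set c : (Fin n → ℝ) → Fin n → ℝ := fun x p =>
      if μ p = 0 then 0 else (Real.sqrt (μ p))⁻¹ * (v p ⬝ᵥ x) with hcdef
    set Y₀ : Matrix (Fin m) (Fin n) ℝ := ∑ p, if μ p = 0 then 0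
        else (Real.sqrt (μ p))⁻¹ • Matrix.vecMulVec (A *ᵥ v p) (v p) with hY₀def
    have hY₀mul : ∀ x : Fin n → ℝ, Y₀ *ᵥ x = ∑ p, c x p • (A *ᵥ v p) := by
      intro x
      rw [hY₀def, sum_mulVec]
      refine Finset.sum_congr rfl fun p _ => ?_
      rcases eq_or_ne (μ p) 0 with h | h
      · simp [h, hcdef]
      · rw [if_neg h]
        rw [Matrix.smul_mulVec, vecMulVec_mulVec, hcdef]
        simp only [if_neg h, smul_smul]
    refine ⟨Y₀, ?_, ?_⟩
    · apply spectralNorm_le_one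
      intro x
      rw [hY₀mul x, sum_dot]
      have hterm : ∀ p, (c x p • (A *ᵥ v p)) ⬝ᵥ (∑ q, c x q • (A *ᵥ v q))
          = c x p * c x p * μ p := by
        intro p
        rw [dot_sum]
        have : ∀ q, (c x p • (A *ᵥ v p)) ⬝ᵥ (c x q • (A *ᵥ v q))
            = if p = q then c x p * c x p * μ p else 0 := by
          intro q
          rw [smul_dotProduct, dotProduct_smul, hAv p q]
          rcases eq_or_ne p q with h | h
          · subst h; simp [smul_eq_mul, mul_assoc]
          · simp [h]
        simp_rw [this]
        simp
      simp_rw [hterm]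
      rw [← hpars x]
      refine Finset.sum_le_sum fun p _ => ?_
      rcases eq_or_ne (μ p) 0 with h | h
      · simp [hcdef, h]
        positivity
      · refine le_of_eq ?_
        rw [hcdef]
        simp only [if_neg h]
        have hsq : (Real.sqrt (μ p))⁻¹ * (Real.sqrt (μ p))⁻¹ * μ p = 1 := by
          rw [← mul_inv, Real.mul_self_sqrt (hμ0 p)]
          exact inv_mul_cancel₀ h
        calc (Real.sqrt (μ p))⁻¹ * (v p ⬝ᵥ x) * ((Real.sqrt (μ p))⁻¹ * (v p ⬝ᵥ x)) * μ p
            = (v p ⬝ᵥ x) ^ 2 * ((Real.sqrt (μ p))⁻¹ * (Real.sqrt (μ p))⁻¹ * μ p) := by ring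
          _ = (v p ⬝ᵥ x) ^ 2 := by rw [hsq, mul_one]
    · rw [hexpand Y₀, hnuc]
      refine Finset.sum_congr rfl fun q _ => ?_
      rw [hY₀mul (v q), dot_sum]
      have : ∀ p, (A *ᵥ v q) ⬝ᵥ (c (v q) p • (A *ᵥ v p))
          = if q = p then c (v q) p * μ q else 0 := by
        intro p
        rw [dotProduct_smul, hAv q p]
        rcases eq_or_ne q p with h | h
        · subst h; simp [smul_eq_mul, mul_comm]
        · simp [h]
      simp_rw [this]
      rw [Finset.sum_ite_eq Finset.univ q fun p => c (v q) p * μ q]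
      simp only [Finset.mem_univ, if_true]
      rcases eq_or_ne (μ q) 0 with h | h
      · simp [hcdef, h]
      · rw [hcdef]
        simp only [if_neg h, hortho q q, if_pos rfl, mul_one]
        rw [← Real.sqrt_mul_self (hμ0 q)] ; rw [← Real.sqrt_mul_self (hμ0 q)]
        field_simp
        rw [if_pos trivial, one_mul, Real.sq_sqrt (Real.sqrt_nonneg _)]

end SliceDual

/-- The slice-wise sum of nuclear norms is the dual norm of the slice-wise maximum of
spectral norms: for every family of matrix slices `X`, `∑ k, ‖X k‖_*` is the greatest
element of `{∑ k ⟪X k, Y k⟫ : ‖Y k‖₂ ≤ 1 for all k}`. -/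
theorem sliceNuclearNorm_dual_of_sliceSpectralNorm {K m n : ℕ}
    (X : Fin K → Matrix (Fin m) (Fin n) ℝ) :
    (∀ Y : Fin K → Matrix (Fin m) (Fin n) ℝ, (∀ k, matrixSpectralNorm (Y k) ≤ 1) →
      ∑ k, ∑ i, ∑ j, X k i j * Y k i j ≤ ∑ k, nuclearNorm (X k)) ∧
    (∃ Y : Fin K → Matrix (Fin m) (Fin n) ℝ, (∀ k, matrixSpectralNorm (Y k) ≤ 1) ∧
      ∑ k, ∑ i, ∑ j, X k i j * Y k i j = ∑ k, nuclearNorm (X k)) := by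
  constructor
  · intro Y hY
    exact Finset.sum_le_sum fun k _ => (SliceDual.matrix_dual (X k)).1 (Y k) (hY k)
  · choose Y hY1 hY2 using fun k => (SliceDual.matrix_dual (X k)).2
    exact ⟨Y, hY1, Finset.sum_congr rfl fun k _ => hY2 k⟩
end

section
/- Exact recovery in the noiseless case: let M ∈ E, let 𝕀 be a finite set of indices of ι with sampling rate p = |𝕀| / |ι| > 0, and let Ψ : E → E be the coordinate projection onto 𝕀. Let H = {i : (U M) i ≠ 0}, define P_S : E → E by P_S(x) = U⁻¹(restriction of U x to H, zero off H), and P_{S⊥}(x) = x − P_S(x). Fix 0 ≤ C₁ < 1 and C₂ > 0 and assume: (a) ⟪Ψ(P_S x), P_S x⟫ ≥ C₂·p·‖P_S x‖² for every x ∈ E; and (b) there exist G, s ∈ E with P_S(s) = s, G = Ψ(s), P_S(G) = U⁻¹(entrywise Real.sign of U M), and ‖P_{S⊥}(G)‖_{U,∞} ≤ C₁. If X̂ ∈ E satisfies Ψ(X̂) = Ψ(M) and ‖X̂‖_{U,1} ≤ ‖X‖_{U,1} for every X ∈ E with Ψ(X) = Ψ(M), then X̂ = M. -/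
open scoped RealInnerProductSpace

private lemma abs_add_sign_mul_le (a b : ℝ) : |a| + Real.sign a * b ≤ |a + b| := by
  rcases lt_trichotomy a 0 with h | h | h
  · rw [Real.sign_of_neg h, abs_of_neg h]
    have : -(a + b) ≤ |a + b| := neg_le_abs _
    linarith
  · simp [h]
  · rw [Real.sign_of_pos h, abs_of_pos h]
    have : a + b ≤ |a + b| := le_abs_self _
    linarith

/-- Build an element of Euclidean space from a function of coordinates. -/
noncomputable def toE {ι : Type*} [Fintype ι] (f : ι → ℝ) : EuclideanSpace ℝ ι :=
  (WithLp.equiv 2 (ι → ℝ)).symm f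

/-- Exact recovery in the noiseless case (`δ = 0` case of Theorem 2 of the paper):
under the incoherence condition (a) and the dual-certificate condition (b), the
minimizer of the tensor `U₁` norm subject to `Ψ(X) = Ψ(M)` equals the true tensor. -/
theorem exact_tensor_completion_recovery {ι : Type*} [Fintype ι] [Nonempty ι]
    [DecidableEq ι]
    (U : EuclideanSpace ℝ ι ≃ₗᵢ[ℝ] EuclideanSpace ℝ ι)
    (M : EuclideanSpace ℝ ι)
    (𝕀 : Finset ι)
    (Ψ : EuclideanSpace ℝ ι → EuclideanSpace ℝ ι)
    (hΨ : ∀ x, Ψ x = toE fun i => if i ∈ 𝕀 then x i else 0)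
    (p : ℝ) (hp : p = (𝕀.card : ℝ) / (Fintype.card ι : ℝ)) (hppos : 0 < p)
    (PS : EuclideanSpace ℝ ι → EuclideanSpace ℝ ι)
    (hPS : ∀ x, PS x = U.symm (toE fun i => if U M i ≠ 0 then U x i else 0))
    (C₁ C₂ : ℝ) (hC₁0 : 0 ≤ C₁) (hC₁1 : C₁ < 1) (hC₂ : 0 < C₂)
    -- (a) `P_S Ψ_𝕀 P_S ≽ C₂ p I`:
    (ha : ∀ x : EuclideanSpace ℝ ι, C₂ * p * ‖PS x‖ ^ 2 ≤ ⟪Ψ (PS x), PS x⟫)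
    -- (b) dual certificate:
    (hb : ∃ G s : EuclideanSpace ℝ ι,
      PS s = s ∧ G = Ψ s ∧ PS G = U.symm (toE fun i => Real.sign (U M i)) ∧
      tensorUinf U (G - PS G) ≤ C₁)
    (Xhat : EuclideanSpace ℝ ι)
    (hfeas : Ψ Xhat = Ψ M)
    (hopt : ∀ X : EuclideanSpace ℝ ι, Ψ X = Ψ M → tensorU1 U Xhat ≤ tensorU1 U X) :
    Xhat = M := by
  classical
  obtain ⟨G, s, hsS, hGs, hPSG, hinf⟩ := hb
  set D : EuclideanSpace ℝ ι := Xhat - M with hD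
  -- D vanishes on the observed set
  have hDi : ∀ i ∈ 𝕀, D i = 0 := by
    intro i hi
    have h1 : Ψ Xhat i = Ψ M i := congrArg (fun v => v i) hfeas
    rw [hΨ, hΨ] at h1
    simp only [toE, WithLp.equiv_symm_apply, PiLp.toLp_apply, if_pos hi] at h1
    simp [hD, h1]
  have hΨD : Ψ D = 0 := by
    rw [hΨ]
    ext i
    simp only [toE, WithLp.equiv_symm_apply, PiLp.toLp_apply]
    by_cases hi : i ∈ 𝕀
    · simp [hi, hDi i hi]
    · simp [hi]
  -- coordinates of `U ∘ PS`
  have hUPS : ∀ x : EuclideanSpace ℝ ι, ∀ i,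
      U (PS x) i = if U M i ≠ 0 then U x i else 0 := by
    intro x i
    rw [hPS, U.apply_symm_apply]
    rfl
  have hUD : ∀ i, U D i = U Xhat i - U M i := by
    intro i
    rw [hD, map_sub]
    rfl
  -- the certificate coordinates
  have hUGS : ∀ i, U M i ≠ 0 → U G i = Real.sign (U M i) := by
    intro i hi
    have h1 : U (PS G) i = Real.sign (U M i) := by
      rw [hPSG, U.apply_symm_apply]; rfl
    rw [hUPS G i, if_pos hi] at h1
    exact h1
  have hr : ∀ i, U (G - PS G) i = if U M i ≠ 0 then 0 else U G i := by
    intro i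
    have : U (G - PS G) i = U G i - U (PS G) i := by rw [map_sub]; rfl
    rw [this, hUPS G i]
    by_cases hi : U M i ≠ 0 <;> simp [hi]
  have hrC : ∀ i, |U (G - PS G) i| ≤ C₁ := by
    intro i
    exact le_trans (Finset.le_sup' (fun j => |U (G - PS G) j|) (Finset.mem_univ i)) hinf
  -- ⟪G, D⟫ = 0
  have hGD : ⟪G, D⟫ = 0 := by
    rw [hGs]
    simp only [PiLp.inner_apply, RCLike.inner_apply, conj_trivial]
    apply Finset.sum_eq_zero
    intro i _
    rw [hΨ]
    simp only [toE, WithLp.equiv_symm_apply, PiLp.toLp_apply]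
    by_cases hi : i ∈ 𝕀
    · simp [hi, hDi i hi]
    · simp [hi]
  -- scalar quantities
  set T : ℝ := ∑ i, if U M i ≠ 0 then 0 else |U D i| with hT
  set A : ℝ := ∑ i, Real.sign (U M i) * U D i with hA
  set B : ℝ := ∑ i, U (G - PS G) i * U D i with hB
  have hAB : A + B = 0 := by
    have h1 : (∑ i, U G i * U D i) = ⟪G, D⟫ := by
      rw [← LinearIsometryEquiv.inner_map_map U G D, PiLp.inner_apply]
      simp [RCLike.inner_apply]
      exact Finset.sum_congr rfl fun _ _ => mul_comm _ _
    have hGD2 : (∑ i, U G i * U D i) = 0 := h1.trans hGD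
    rw [hA, hB, ← Finset.sum_add_distrib, ← hGD2]
    apply Finset.sum_congr rfl
    intro i _
    rw [hr i]
    by_cases hi : U M i ≠ 0
    · rw [if_pos hi, hUGS i hi]; ring
    · push_neg at hi
      simp [hi]
  have hTnn : 0 ≤ T := by
    apply Finset.sum_nonneg
    intro i _
    by_cases hi : U M i ≠ 0 <;> simp [hi, abs_nonneg]
  have hBle : |B| ≤ C₁ * T := by
    calc |B| ≤ ∑ i, |U (G - PS G) i * U D i| := Finset.abs_sum_le_sum_abs _ _
    _ ≤ ∑ i, C₁ * (if U M i ≠ 0 then 0 else |U D i|) := by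
        apply Finset.sum_le_sum
        intro i _
        rw [abs_mul]
        by_cases hi : U M i ≠ 0
        · rw [hr i, if_pos hi, if_pos hi]
          simp
        · rw [if_neg hi]
          exact mul_le_mul_of_nonneg_right (hrC i) (abs_nonneg _)
    _ = C₁ * T := by rw [hT, Finset.mul_sum]
  -- lower bound on the objective at Xhat
  have hlow : tensorU1 U M + A + T ≤ tensorU1 U Xhat := by
    have h1 : tensorU1 U M + A + T
        = ∑ i, (|U M i| + Real.sign (U M i) * U D i
            + (if U M i ≠ 0 then 0 else |U D i|)) := by
      rw [tensorU1, hA, hT, ← Finset.sum_add_distrib, ← Finset.sum_add_distrib]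
    rw [h1, tensorU1]
    apply Finset.sum_le_sum
    intro i _
    have h2 : U Xhat i = U M i + U D i := by rw [hUD i]; ring
    rw [h2]
    by_cases hi : U M i ≠ 0
    · rw [if_pos hi]
      have := abs_add_sign_mul_le (U M i) (U D i)
      linarith
    · push_neg at hi
      simp [hi]
  have hopt' : tensorU1 U Xhat ≤ tensorU1 U M := hopt M rfl
  -- conclude T = 0
  have hTA : A + T ≤ 0 := by linarith
  have hTB : T ≤ C₁ * T := by
    have h1 : T ≤ B := by linarith
    calc T ≤ B := h1
    _ ≤ |B| := le_abs_self _
    _ ≤ C₁ * T := hBle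
  have hT0 : T = 0 := by nlinarith
  have hdo : ∀ i, ¬ U M i ≠ 0 → U D i = 0 := by
    intro i hi
    have h1 : ∀ j ∈ Finset.univ, (0:ℝ) ≤ if U M j ≠ 0 then 0 else |U D j| := by
      intro j _
      by_cases hj : U M j ≠ 0 <;> simp [hj, abs_nonneg]
    have h2 := (Finset.sum_eq_zero_iff_of_nonneg h1).mp hT0 i (Finset.mem_univ i)
    rw [if_neg hi] at h2
    exact abs_eq_zero.mp h2
  -- hence PS D = D
  have hPSD : PS D = D := by
    apply U.injective
    ext i
    rw [hUPS D i]
    by_cases hi : U M i ≠ 0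
    · rw [if_pos hi]
    · rw [if_neg hi, hdo i hi]
  -- use condition (a)
  have hkey := ha D
  rw [hPSD, hΨD] at hkey
  simp only [inner_zero_left] at hkey
  have h2 : C₂ * p * ‖D‖ ^ 2 = 0 := le_antisymm hkey (by positivity)
  have h3 : ‖D‖ ^ 2 = 0 := by
    rcases mul_eq_zero.mp h2 with h | h
    · exact absurd h (ne_of_gt (mul_pos hC₂ hppos))
    · exact h
  have : D = 0 := by
    have h0 : ‖D‖ = 0 := pow_eq_zero_iff (two_ne_zero) |>.mp h3
    exact norm_eq_zero.mp h0
  rw [hD, sub_eq_zero] at this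
  exact this
end
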